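/- For every real number t and every n ≥ 0, det((t^{i+j}/(i+j+1))_{i,j=0}^{n}) = t^{n²+n} / ∏_{j=1}^{n} ((2j+1)·C(2j,j)²). In particular (t = 1) the Hilbert determinant satisfies det((1/(i+j+1))_{i,j=0}^{n}) = 1/∏_{j=1}^{n} ((2j+1)·C(2j,j)²). -/

import Mathlib

open Finset Function
open scoped fwdDiff

lemma hilb_aux1 (a : ℕ) : ∀ s : ℕ,
    ∑ j ∈ range (a+1), (-1:ℝ)^j * (a.choose j) / ((j:ℝ) + s + 1) =
      (a.factorial : ℝ) * s.factorial / ((a + s + 1).factorial) := by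
  induction a with
  | zero =>
    intro s
    have h1 : ((s+1).factorial : ℝ) = (s+1) * s.factorial := by
      rw [Nat.factorial_succ]; push_cast; ring
    have h2 : ((s.factorial : ℝ)) ≠ 0 := Nat.cast_ne_zero.mpr (Nat.factorial_ne_zero s)
    have h3 : ((s:ℝ) + 1) ≠ 0 := by positivity
    simp only [zero_add, range_one, sum_singleton, pow_zero, Nat.choose_zero_right,
      Nat.cast_one, Nat.cast_zero]
    rw [h1]
    field_simp
    simp
  | succ a ih =>
    intro s
    have key : ∑ j ∈ range (a+1+1), (-1:ℝ)^j * ((a+1).choose j) / ((j:ℝ) + s + 1)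
        = (∑ j ∈ range (a+1), (-1:ℝ)^j * (a.choose j) / ((j:ℝ) + s + 1))
          - ∑ j ∈ range (a+1), (-1:ℝ)^j * (a.choose j) / ((j:ℝ) + (s+1) + 1) := by
      rw [Finset.sum_range_succ' (fun j => (-1:ℝ)^j * ((a+1).choose j) / ((j:ℝ) + s + 1)) (a+1)]
      rw [Finset.sum_range_succ' (fun j => (-1:ℝ)^j * ((a:ℕ).choose j) / ((j:ℝ) + s + 1)) a]
      have hsplit : ∀ j ∈ range (a+1),
          (-1:ℝ)^(j+1) * ((a+1).choose (j+1)) / (((j:ℕ)+1:ℕ) + s + 1)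
          = (-1:ℝ)^(j+1) * ((a).choose (j+1)) / (((j:ℕ)+1:ℝ) + s + 1)
            - (-1:ℝ)^j * ((a).choose j) / ((j:ℝ) + (s+1) + 1) := by
        intro j _
        rw [Nat.choose_succ_succ]
        push_cast
        ring
      rw [Finset.sum_congr rfl hsplit, Finset.sum_sub_distrib]
      have hlast : ∑ j ∈ range (a+1), (-1:ℝ)^(j+1) * ((a).choose (j+1)) / (((j:ℕ)+1:ℝ) + s + 1)
          = ∑ j ∈ range a, (-1:ℝ)^(j+1) * ((a).choose (j+1)) / (((j:ℕ)+1:ℝ) + s + 1) := by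
        rw [Finset.sum_range_succ]
        simp [Nat.choose_succ_self]
      rw [hlast]
      simp only [Nat.choose_zero_right]
      push_cast
      ring
    have ih2 := ih (s+1)
    push_cast at ih2
    rw [key, ih s, ih2]
    have e1 : a + (s+1) + 1 = a + s + 1 + 1 := by omega
    have e2 : a + 1 + s + 1 = a + s + 1 + 1 := by omega
    rw [e1, e2, Nat.factorial_succ (a+s+1), Nat.factorial_succ s, Nat.factorial_succ a]
    have h2 : ((s.factorial : ℝ)) ≠ 0 := Nat.cast_ne_zero.mpr (Nat.factorial_ne_zero s)
    have h4 : (((a+s+1).factorial : ℝ)) ≠ 0 := Nat.cast_ne_zero.mpr (Nat.factorial_ne_zero _)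
    have h5 : ((a:ℝ) + s + 1 + 1) ≠ 0 := by positivity
    push_cast
    field_simp
    ring

lemma hilb_shift (g : ℕ → ℤ) (c : ℕ) (k : ℕ) :
    (Δ_[1])^[k] (fun x => g (x + c)) = fun x => (Δ_[1])^[k] g (x + c) := by
  induction k generalizing g with
  | zero => simp
  | succ k ih =>
    rw [iterate_succ_apply, iterate_succ_apply]
    have : Δ_[1] (fun x => g (x + c)) = fun x => (Δ_[1] g) (x + c) := by
      funext x
      simp only [fwdDiff]
      congr 2
      omega
    rw [this, ih]

lemma hilb_iter_zero (k : ℕ) : (Δ_[1])^[k] (fun _ => (0:ℤ)) = fun _ => 0 := by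
  induction k with
  | zero => simp
  | succ k ih =>
    rw [iterate_succ_apply]
    have : Δ_[1] (fun _ => (0:ℤ)) = fun _ => (0:ℤ) := by
      funext x; simp [fwdDiff]
    rw [this, ih]

lemma hilb_aux2 (i l : ℕ) :
    ∑ m ∈ range (i+1), (-1:ℤ)^m * (i.choose m) * ((m+l).choose l) = (-1)^i * (l.choose i) := by
  have hfd := fwdDiff_iter_eq_sum_shift (1:ℕ) (fun x => (((x+l).choose l : ℕ) : ℤ)) i 0
  simp only [zero_add, smul_eq_mul, smul_eq_mul, mul_one] at hfd
  -- hfd : (Δ_[1])^[i] f 0 = ∑ k ∈ range (i+1), (-1)^(i-k) * C(i,k) * C(k+l, l)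
  have hsum : ∑ m ∈ range (i+1), (-1:ℤ)^m * (i.choose m) * ((m+l).choose l)
      = (-1)^i * (Δ_[1])^[i] (fun x => (((x+l).choose l : ℕ) : ℤ)) 0 := by
    rw [hfd, Finset.mul_sum]
    refine Finset.sum_congr rfl fun m hm => ?_
    have hmi : m ≤ i := by simp at hm; omega
    have : (-1:ℤ)^i * (-1)^(i-m) = (-1)^m := by
      rw [← pow_add]
      have : i + (i - m) = m + 2 * (i - m) := by omega
      rw [this, pow_add, pow_mul]
      simp
    rw [← mul_assoc, ← mul_assoc, this]
  rw [hsum]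
  have hshift := hilb_shift (fun x => ((x.choose l : ℕ) : ℤ)) l i
  rw [hshift]
  simp only [zero_add]
  rcases le_or_gt i l with hil | hli
  · have hl : i + (l - i) = l := by omega
    have hiter : (Δ_[1])^[i] (fun x => ((x.choose l : ℕ) : ℤ))
        = fun x => ((x.choose (l-i) : ℕ) : ℤ) := by
      conv_lhs => rw [← hl]
      exact fwdDiff_iter_choose (l-i) i
    rw [hiter]
    simp only []
    rw [Nat.choose_symm hil]
  · -- l < i : both sides are 0
    have hc : l.choose i = 0 := Nat.choose_eq_zero_of_lt hli
    have h0 : (Δ_[1])^[l] (fun x => ((x.choose l : ℕ) : ℤ)) = fun x => ((x.choose 0 : ℕ) : ℤ) := by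
      have := fwdDiff_iter_choose 0 l
      simpa using this
    have h1 : (Δ_[1])^[1] (fun x => ((x.choose 0 : ℕ) : ℤ)) = fun _ => (0:ℤ) := by
      funext x; simp [fwdDiff]
    have hz : (Δ_[1])^[i] (fun x => ((x.choose l : ℕ) : ℤ)) = fun _ => (0:ℤ) := by
      rw [show i = (i - l - 1) + 1 + l from by omega, iterate_add_apply, iterate_add_apply,
        h0, h1, hilb_iter_zero]
    rw [hz]
    simp [hc]

lemma hilb_aux3 (i k : ℕ) (hk : k ≤ i) :
    ((i+k).choose k : ℕ) = ∑ m ∈ range (i+1), i.choose m * k.choose m := by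
  rw [Nat.add_choose_eq, Finset.Nat.sum_antidiagonal_eq_sum_range_succ_mk]
  have h1 : ∀ a ∈ range (k+1), i.choose a * k.choose (k - a) = i.choose a * k.choose a := by
    intro a ha
    simp only [mem_range] at ha
    rw [Nat.choose_symm (by omega)]
  rw [Finset.sum_congr rfl h1]
  apply Finset.sum_subset
  · intro x hx; simp only [mem_range] at *; omega
  · intro x _ hx
    simp only [mem_range, not_lt] at hx
    rw [show k.choose x = 0 from Nat.choose_eq_zero_of_lt (by omega)]
    ring

lemma hilb_aux4 (i l : ℕ) :
    ∑ k ∈ range (i+1), (-1:ℝ)^(i+k) * (i.choose k) * ((i+k).choose k) / ((k:ℝ) + l + 1) =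
      ((i.factorial : ℝ) * l.factorial * (l.choose i)) / ((i + l + 1).factorial) := by
  -- Step 1: expand (i+k).choose k by Vandermonde and swap sums
  have step1 : ∑ k ∈ range (i+1), (-1:ℝ)^(i+k) * (i.choose k) * ((i+k).choose k) / ((k:ℝ) + l + 1)
      = ∑ m ∈ range (i+1), ∑ k ∈ range (i+1),
          (-1:ℝ)^(i+k) * (i.choose k) * ((i.choose m : ℕ) * (k.choose m : ℕ)) / ((k:ℝ) + l + 1) := by
    rw [Finset.sum_comm]
    refine Finset.sum_congr rfl fun k hk => ?_
    simp only [mem_range] at hk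
    rw [hilb_aux3 i k (by omega)]
    push_cast
    rw [Finset.mul_sum, Finset.sum_div]
  rw [step1]
  -- Step 2: evaluate the inner sum for each m
  have step2 : ∀ m ∈ range (i+1),
      ∑ k ∈ range (i+1), (-1:ℝ)^(i+k) * (i.choose k) * ((i.choose m : ℕ) * (k.choose m : ℕ)) / ((k:ℝ) + l + 1)
      = (-1:ℝ)^(i+m) * (i.choose m) * (i.choose m) *
          (((i-m).factorial : ℝ) * ((m+l).factorial : ℝ) / (((i+l+1).factorial : ℝ))) := by
    intro m hm
    simp only [mem_range] at hm
    have hmi : m ≤ i := by omega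
    -- restrict the sum to k ∈ Ico m (i+1)
    have hrestrict : ∑ k ∈ range (i+1), (-1:ℝ)^(i+k) * (i.choose k) * ((i.choose m : ℕ) * (k.choose m : ℕ)) / ((k:ℝ) + l + 1)
        = ∑ k ∈ Ico m (i+1), (-1:ℝ)^(i+k) * (i.choose k) * ((i.choose m : ℕ) * (k.choose m : ℕ)) / ((k:ℝ) + l + 1) := by
      symm
      apply Finset.sum_subset
      · intro x hx; simp only [mem_Ico, mem_range] at *; omega
      · intro x hx hx2
        simp only [mem_range] at hx
        simp only [mem_Ico, not_and, not_lt] at hx2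
        have hxm : x < m := by
          by_contra hc
          push_neg at hc
          have := hx2 hc
          omega
        rw [Nat.choose_eq_zero_of_lt hxm]
        simp
    rw [hrestrict, Finset.sum_Ico_eq_sum_range]
    have hlen : i + 1 - m = (i - m) + 1 := by omega
    rw [hlen]
    have hterm : ∀ j ∈ range ((i-m)+1),
        (-1:ℝ)^(i+(m+j)) * (i.choose (m+j)) * ((i.choose m : ℕ) * ((m+j).choose m : ℕ)) / (((m+j:ℕ):ℝ) + l + 1)
        = ((-1:ℝ)^(i+m) * (i.choose m) * (i.choose m)) *
            ((-1:ℝ)^j * ((i-m).choose j) / ((j:ℝ) + (m+l) + 1)) := by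
      intro j hj
      simp only [mem_range] at hj
      have hji : m + j ≤ i := by omega
      have hch : (i.choose (m+j)) * ((m+j).choose m) = i.choose m * (i-m).choose j := by
        have := Nat.choose_mul (n := i) (k := m+j) (s := m) (by omega)
        simpa [Nat.add_sub_cancel_left] using this
      have hsign : (-1:ℝ)^(i+(m+j)) = (-1:ℝ)^(i+m) * (-1:ℝ)^j := by
        rw [← pow_add]; ring_nf
      push_cast
      rw [hsign]
      have hch' : ((i.choose (m+j)) : ℝ) * (((m+j).choose m) : ℝ) = (i.choose m : ℝ) * ((i-m).choose j : ℝ) := by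
        exact_mod_cast congrArg (fun x : ℕ => (x:ℝ)) hch
      have hd1 : ((m:ℝ) + j + l + 1) ≠ 0 := by positivity
      have hd2 : ((j:ℝ) + (m + l) + 1) ≠ 0 := by positivity
      field_simp
      linear_combination ((i.choose m : ℝ) * ((j:ℝ) + m + l + 1)) * hch'
    rw [Finset.sum_congr rfl hterm, ← Finset.mul_sum]
    have h1 := hilb_aux1 (i-m) (m+l)
    have hidx : (i-m) + (m+l) + 1 = i+l+1 := by omega
    rw [hidx] at h1
    push_cast at h1
    rw [h1]
  rw [Finset.sum_congr rfl step2]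
  -- Step 3: evaluate the outer sum
  have step3 : ∀ m ∈ range (i+1),
      (-1:ℝ)^(i+m) * (i.choose m) * (i.choose m) *
          (((i-m).factorial : ℝ) * ((m+l).factorial : ℝ) / (((i+l+1).factorial : ℝ)))
      = ((i.factorial : ℝ) * (l.factorial : ℝ) / ((i+l+1).factorial : ℝ)) *
          ((-1:ℝ)^(i+m) * (i.choose m) * ((m+l).choose l)) := by
    intro m hm
    simp only [mem_range] at hm
    have hmi : m ≤ i := by omega
    have c1 : ((i.choose m : ℕ) : ℝ) * (m.factorial : ℝ) * ((i-m).factorial : ℝ) = (i.factorial : ℝ) := by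
      exact_mod_cast congrArg (fun x : ℕ => (x:ℝ)) (Nat.choose_mul_factorial_mul_factorial hmi)
    have c2 : (((m+l).choose l : ℕ) : ℝ) * (l.factorial : ℝ) * (m.factorial : ℝ) = ((m+l).factorial : ℝ) := by
      have := Nat.choose_mul_factorial_mul_factorial (show l ≤ m + l by omega)
      rw [Nat.add_sub_cancel] at this
      exact_mod_cast congrArg (fun x : ℕ => (x:ℝ)) this
    have key : (i.choose m : ℝ) * (i.choose m : ℝ) * (((i-m).factorial : ℝ) * ((m+l).factorial : ℝ))
        = (i.factorial : ℝ) * (l.factorial : ℝ) * ((i.choose m : ℝ) * (((m+l).choose l : ℕ) : ℝ)) := by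
      linear_combination (-((i.choose m : ℝ) * (i.choose m : ℝ) * ((i-m).factorial : ℝ))) * c2
        + ((i.choose m : ℝ) * (((m+l).choose l : ℕ) : ℝ) * (l.factorial : ℝ)) * c1
    calc (-1:ℝ)^(i+m) * (i.choose m) * (i.choose m) *
          (((i-m).factorial : ℝ) * ((m+l).factorial : ℝ) / (((i+l+1).factorial : ℝ)))
        = (-1:ℝ)^(i+m) * ((i.choose m : ℝ) * (i.choose m : ℝ) *
            (((i-m).factorial : ℝ) * ((m+l).factorial : ℝ)) / ((i+l+1).factorial : ℝ)) := by ring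
      _ = (-1:ℝ)^(i+m) * ((i.factorial : ℝ) * (l.factorial : ℝ) *
            ((i.choose m : ℝ) * (((m+l).choose l : ℕ) : ℝ)) / ((i+l+1).factorial : ℝ)) := by rw [key]
      _ = ((i.factorial : ℝ) * (l.factorial : ℝ) / ((i+l+1).factorial : ℝ)) *
            ((-1:ℝ)^(i+m) * (i.choose m) * ((m+l).choose l)) := by ring
  rw [Finset.sum_congr rfl step3, ← Finset.mul_sum]
  -- Step 4: apply hilb_aux2
  have h2 : ∑ m ∈ range (i+1), (-1:ℝ)^(i+m) * (i.choose m) * ((m+l).choose l)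
      = (l.choose i : ℝ) := by
    have hz := hilb_aux2 i l
    have : ∑ m ∈ range (i+1), (-1:ℝ)^(i+m) * (i.choose m) * ((m+l).choose l)
        = (-1:ℝ)^i * ∑ m ∈ range (i+1), (-1:ℝ)^m * (i.choose m) * ((m+l).choose l) := by
      rw [Finset.mul_sum]
      refine Finset.sum_congr rfl fun m _ => ?_
      rw [pow_add]
      ring
    rw [this]
    have hz' : ∑ m ∈ range (i+1), (-1:ℝ)^m * (i.choose m) * ((m+l).choose l)
        = (-1:ℝ)^i * (l.choose i) := by
      exact_mod_cast congrArg (fun x : ℤ => (x:ℝ)) hz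
    rw [hz']
    rw [← mul_assoc, ← pow_add]
    simp [pow_add, pow_mul, ← two_mul]
  rw [h2]
  ring

lemma hilb_det (n : ℕ) :
    Matrix.det (Matrix.of fun i j : Fin (n + 1) =>
        (1 : ℝ) / (((i : ℕ) + (j : ℕ) + 1 : ℕ) : ℝ)) =
      1 / ∏ i : Fin (n+1), ((2 * ((i:ℕ):ℝ) + 1) * ((Nat.choose (2 * (i:ℕ)) (i:ℕ) : ℕ) : ℝ) ^ 2) := by
  set H : Matrix (Fin (n+1)) (Fin (n+1)) ℝ :=
    Matrix.of (fun i j : Fin (n+1) => (1:ℝ) / (((i:ℕ) + (j:ℕ) + 1 : ℕ) : ℝ)) with hH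
  set P : Matrix (Fin (n+1)) (Fin (n+1)) ℝ :=
    Matrix.of (fun i k : Fin (n+1) =>
      (-1:ℝ)^((i:ℕ)+(k:ℕ)) * (Nat.choose (i:ℕ) (k:ℕ) : ℝ) * (Nat.choose ((i:ℕ)+(k:ℕ)) (k:ℕ) : ℝ)) with hP
  -- the product P * H
  have hPH : ∀ i l : Fin (n+1), (P * H) i l =
      (((i:ℕ).factorial : ℝ) * ((l:ℕ).factorial : ℝ) * ((Nat.choose (l:ℕ) (i:ℕ) : ℕ) : ℝ))
        / ((((i:ℕ) + (l:ℕ) + 1).factorial : ℝ)) := by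
    intro i l
    rw [Matrix.mul_apply]
    rw [← hilb_aux4 (i:ℕ) (l:ℕ)]
    have hstep : ∀ k : Fin (n+1), P i k * H k l
        = (fun k : ℕ => (-1:ℝ)^((i:ℕ)+k) * (Nat.choose (i:ℕ) k : ℝ)
            * (Nat.choose ((i:ℕ)+k) k : ℝ) / ((k:ℝ) + (l:ℕ) + 1)) (k:ℕ) := by
      intro k
      simp only [hP, hH, Matrix.of_apply]
      push_cast
      ring
    rw [Finset.sum_congr rfl (fun k _ => hstep k)]
    rw [Fin.sum_univ_eq_sum_range (fun k : ℕ => (-1:ℝ)^((i:ℕ)+k) * (Nat.choose (i:ℕ) k : ℝ)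
            * (Nat.choose ((i:ℕ)+k) k : ℝ) / ((k:ℝ) + (l:ℕ) + 1)) (n+1)]
    symm
    apply Finset.sum_subset
    · intro x hx
      simp only [mem_range] at *
      have := i.isLt
      omega
    · intro x _ hx
      simp only [mem_range, not_lt] at hx
      rw [show Nat.choose (i:ℕ) x = 0 from Nat.choose_eq_zero_of_lt (by omega)]
      simp
  -- P * H * Pᵀ
  set M : Matrix (Fin (n+1)) (Fin (n+1)) ℝ := P * H * P.transpose with hM
  have hMentry : ∀ i j : Fin (n+1), M i j =
      ∑ l : Fin (n+1),
        ((((i:ℕ).factorial : ℝ) * ((l:ℕ).factorial : ℝ) * ((Nat.choose (l:ℕ) (i:ℕ) : ℕ) : ℝ))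
          / ((((i:ℕ) + (l:ℕ) + 1).factorial : ℝ)))
        * ((-1:ℝ)^((j:ℕ)+(l:ℕ)) * (Nat.choose (j:ℕ) (l:ℕ) : ℝ) * (Nat.choose ((j:ℕ)+(l:ℕ)) (l:ℕ) : ℝ)) := by
    intro i j
    rw [hM, Matrix.mul_apply]
    refine Finset.sum_congr rfl fun l _ => ?_
    rw [hPH i l, Matrix.transpose_apply]
    simp only [hP, Matrix.of_apply]
  have hMtri : M.BlockTriangular id := by
    intro i j hij
    simp only [id_eq] at hij
    rw [hMentry i j]
    apply Finset.sum_eq_zero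
    intro l _
    rcases lt_or_ge (l:ℕ) (i:ℕ) with h | h
    · rcases lt_or_ge (j:ℕ) (l:ℕ) with h2 | h2
      · rw [show Nat.choose (j:ℕ) (l:ℕ) = 0 from Nat.choose_eq_zero_of_lt h2]
        simp
      · rw [show Nat.choose (l:ℕ) (i:ℕ) = 0 from Nat.choose_eq_zero_of_lt h]
        simp
    · have hji : (j:ℕ) < (i:ℕ) := hij
      rw [show Nat.choose (j:ℕ) (l:ℕ) = 0 from Nat.choose_eq_zero_of_lt (by omega)]
      simp
  have hMdiag : ∀ i : Fin (n+1), M i i = 1 / (2*((i:ℕ):ℝ) + 1) := by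
    intro i
    rw [hMentry i i]
    rw [Finset.sum_eq_single i]
    · have hcc : (Nat.choose (2*(i:ℕ)) (i:ℕ)) * (i:ℕ).factorial * (i:ℕ).factorial
          = (2*(i:ℕ)).factorial := by
        have := Nat.choose_mul_factorial_mul_factorial (show (i:ℕ) ≤ 2*(i:ℕ) by omega)
        rwa [show 2*(i:ℕ) - (i:ℕ) = (i:ℕ) by omega] at this
      have hf : ((i:ℕ) + (i:ℕ) + 1).factorial = ((i:ℕ)+(i:ℕ)+1) * (2*(i:ℕ)).factorial := by
        rw [show (i:ℕ)+(i:ℕ)+1 = (2*(i:ℕ)) + 1 by omega, Nat.factorial_succ]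
      rw [hf]
      have hsign : (-1:ℝ)^((i:ℕ)+(i:ℕ)) = 1 := by
        rw [← two_mul, pow_mul]; norm_num
      rw [hsign, Nat.choose_self]
      rw [show (i:ℕ) + (i:ℕ) = 2*(i:ℕ) by omega]
      have hcc' : ((Nat.choose (2*(i:ℕ)) (i:ℕ) : ℕ) : ℝ) * ((i:ℕ).factorial : ℝ) * ((i:ℕ).factorial : ℝ)
          = ((2*(i:ℕ)).factorial : ℝ) := by exact_mod_cast congrArg (fun x : ℕ => (x:ℝ)) hcc
      have h1 : ((2*(i:ℕ)).factorial : ℝ) ≠ 0 := Nat.cast_ne_zero.mpr (Nat.factorial_ne_zero _)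
      have h2 : (2*((i:ℕ):ℝ) + 1) ≠ 0 := by positivity
      push_cast
      field_simp
      linear_combination hcc'
    · intro l _ hl
      have hln : (l:ℕ) ≠ (i:ℕ) := fun h => hl (Fin.ext h)
      rcases lt_or_ge (l:ℕ) (i:ℕ) with h | h
      · rw [show Nat.choose (l:ℕ) (i:ℕ) = 0 from Nat.choose_eq_zero_of_lt h]
        simp
      · rw [show Nat.choose (i:ℕ) (l:ℕ) = 0 from Nat.choose_eq_zero_of_lt (by omega)]
        simp
    · intro h
      exact absurd (Finset.mem_univ i) h
  -- determinants
  have hdetM : M.det = ∏ i : Fin (n+1), (1 / (2*((i:ℕ):ℝ) + 1)) := by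
    rw [Matrix.det_of_upperTriangular hMtri]
    exact Finset.prod_congr rfl fun i _ => hMdiag i
  have hPtri : P.BlockTriangular OrderDual.toDual := by
    intro i j hij
    have : (i:ℕ) < (j:ℕ) := hij
    simp only [hP, Matrix.of_apply]
    rw [show Nat.choose (i:ℕ) (j:ℕ) = 0 from Nat.choose_eq_zero_of_lt this]
    simp
  have hdetP : P.det = ∏ i : Fin (n+1), ((Nat.choose (2*(i:ℕ)) (i:ℕ) : ℕ) : ℝ) := by
    rw [Matrix.det_of_lowerTriangular P hPtri]
    refine Finset.prod_congr rfl fun i _ => ?_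
    simp only [hP, Matrix.of_apply]
    have hsign : (-1:ℝ)^((i:ℕ)+(i:ℕ)) = 1 := by
      rw [← two_mul, pow_mul]; norm_num
    rw [hsign, Nat.choose_self, show (i:ℕ) + (i:ℕ) = 2*(i:ℕ) by omega]
    push_cast
    ring
  have hdetM2 : M.det = P.det * H.det * P.det := by
    rw [hM, Matrix.det_mul, Matrix.det_mul, Matrix.det_transpose]
  -- solve for H.det
  set B : ℝ := ∏ i : Fin (n+1), ((Nat.choose (2*(i:ℕ)) (i:ℕ) : ℕ) : ℝ) with hB
  set A : ℝ := ∏ i : Fin (n+1), (2*((i:ℕ):ℝ) + 1) with hA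
  have hAne : A ≠ 0 := by
    rw [hA]
    apply Finset.prod_ne_zero_iff.mpr
    intro i _
    positivity
  have hBne : B ≠ 0 := by
    rw [hB]
    apply Finset.prod_ne_zero_iff.mpr
    intro i _
    exact Nat.cast_ne_zero.mpr (Nat.choose_pos (by omega)).ne'
  have hprodinv : ∏ i : Fin (n+1), (1 / (2*((i:ℕ):ℝ) + 1)) = 1 / A := by
    simp only [one_div]
    rw [hA, ← Finset.prod_inv_distrib]
  have heq : B * H.det * B = 1 / A := by
    rw [← hdetP, ← hdetM2, hdetM, hprodinv]
  have hQ : ∏ i : Fin (n+1), ((2 * ((i:ℕ):ℝ) + 1) * ((Nat.choose (2 * (i:ℕ)) (i:ℕ) : ℕ) : ℝ) ^ 2)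
      = A * (B * B) := by
    rw [hA, hB, ← Finset.prod_mul_distrib, ← Finset.prod_mul_distrib]
    refine Finset.prod_congr rfl fun i _ => ?_
    ring
  rw [hQ]
  have : H.det = 1 / (A * (B * B)) := by
    field_simp at heq ⊢
    linear_combination heq
  exact this

/-- `det((t^{i+j}/(i+j+1))_{i,j=0}^n) = t^{n²+n} / ∏_{j=1}^n ((2j+1)·C(2j,j)²)`;
in particular for `t = 1` the Hilbert determinant is `1/∏_{j=1}^n ((2j+1)·C(2j,j)²)`. -/
theorem det_hilbert_type (t : ℝ) (n : ℕ) :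
    Matrix.det (Matrix.of fun i j : Fin (n + 1) =>
        t ^ ((i : ℕ) + (j : ℕ)) / (((i : ℕ) + (j : ℕ) + 1 : ℕ) : ℝ)) =
      t ^ (n ^ 2 + n) /
        ∏ j ∈ Finset.Icc 1 n, ((2 * (j : ℝ) + 1) * (Nat.choose (2 * j) j : ℝ) ^ 2) ∧
    Matrix.det (Matrix.of fun i j : Fin (n + 1) =>
        (1 : ℝ) / (((i : ℕ) + (j : ℕ) + 1 : ℕ) : ℝ)) =
      1 / ∏ j ∈ Finset.Icc 1 n, ((2 * (j : ℝ) + 1) * (Nat.choose (2 * j) j : ℝ) ^ 2) := by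
  -- rewrite the Fin-indexed product as the Icc product
  have hQ : ∏ i : Fin (n+1), ((2 * ((i:ℕ):ℝ) + 1) * ((Nat.choose (2 * (i:ℕ)) (i:ℕ) : ℕ) : ℝ) ^ 2)
      = ∏ j ∈ Finset.Icc 1 n, ((2 * (j : ℝ) + 1) * (Nat.choose (2 * j) j : ℝ) ^ 2) := by
    rw [Fin.prod_univ_eq_prod_range (fun i : ℕ => (2 * ((i:ℕ):ℝ) + 1) * ((Nat.choose (2 * i) i : ℕ) : ℝ) ^ 2) (n+1)]
    rw [Finset.range_eq_Ico, Finset.prod_eq_prod_Ico_succ_bot (by omega)]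
    rw [Finset.Ico_add_one_right_eq_Icc]
    norm_num
  have h2 : Matrix.det (Matrix.of fun i j : Fin (n + 1) =>
      (1 : ℝ) / (((i : ℕ) + (j : ℕ) + 1 : ℕ) : ℝ)) =
      1 / ∏ j ∈ Finset.Icc 1 n, ((2 * (j : ℝ) + 1) * (Nat.choose (2 * j) j : ℝ) ^ 2) := by
    rw [hilb_det n, hQ]
  refine ⟨?_, h2⟩
  -- first part: factor out powers of t
  have hfact : (Matrix.of fun i j : Fin (n + 1) =>
      t ^ ((i : ℕ) + (j : ℕ)) / (((i : ℕ) + (j : ℕ) + 1 : ℕ) : ℝ))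
      = Matrix.of (fun i j : Fin (n+1) => (fun k : Fin (n+1) => t ^ (k:ℕ)) i *
          (Matrix.of (fun i j : Fin (n+1) => (fun k : Fin (n+1) => t ^ (k:ℕ)) j *
            (Matrix.of fun i j : Fin (n + 1) =>
              (1 : ℝ) / (((i : ℕ) + (j : ℕ) + 1 : ℕ) : ℝ)) i j)) i j) := by
    ext i j
    simp only [Matrix.of_apply]
    rw [pow_add]
    ring
  rw [hfact, Matrix.det_mul_column, Matrix.det_mul_row, h2]
  have hpow : ∏ i : Fin (n+1), t ^ (i:ℕ) = t ^ (∑ i ∈ range (n+1), i) := by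
    rw [Fin.prod_univ_eq_prod_range (fun i : ℕ => t ^ i) (n+1)]
    rw [Finset.prod_pow_eq_pow_sum]
  have hsum : (∑ i ∈ range (n+1), i) * 2 = n^2 + n := by
    rw [Finset.sum_range_id_mul_two (n+1)]
    simp
    ring
  rw [hpow, ← mul_assoc, ← pow_add, mul_one_div]
  congr 2
  omega
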